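/- Soundness of leads-to transitions: let p be a composition containing m automata, and let is ∈ locsof(p) (a sequence of m locations, one per automaton of p). If p ⇝ipred fs, p ⇝inv gs, p ⇝sa A, and u = ⋀_{0≤i<#fs} fs.i(is.i), n = ⋀_{0≤i<#gs} gs.i(is.i), then there is a symbolic environment transition p ⇝^{u,n,A} p[is]. -/

import Mathlib

/-! A formalization of the (untimed) CIF subset of the paper:
automata, parallel composition and the synchronizing-action operator,
with explicit, symbolic and linear SOS transition relations. -/

abbrev Var := ℕ
abbrev Val := ℕ
abbrev Loc := ℕ
abbrev Act := ℕ
/-- Actions extended with the silent action τ (`none`). -/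
abbrev ActTau := Option Act
abbrev Valu := Var → Val
/-- State predicates (initialization predicates, invariants, ...). -/
abbrev SPred := Valu → Prop
/-- Reset predicates: `r σ σ'` means `σ'⁺ ∪ σ ⊨ r`. -/
abbrev RPred := Valu → Valu → Prop

def SPred.and (P Q : SPred) : SPred := fun σ => P σ ∧ Q σ
def RPred.and (P Q : RPred) : RPred := fun σ σ' => P σ σ' ∧ Q σ σ'

/-- `x⁺ ∉ FV(r)`: the reset predicate `r` does not depend on the primed value of `x`. -/
def plusFree (r : RPred) (x : Var) : Prop :=
  ∀ σ σ' v, r σ σ' ↔ r σ (Function.update σ' x v)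

/-- Membership of a possibly-silent action in a set of actions (τ is never synchronizing). -/
def memTau (a : ActTau) (A : Set Act) : Prop :=
  match a with
  | some a' => a' ∈ A
  | none => False

structure Automaton where
  V : Set Loc
  init : Loc → SPred
  inv : Loc → SPred
  E : Set (Loc × ActTau × RPred × Loc)
  S : Set Act

/-- `α[v]`: replace the initial-predicate function by `ipred_v(w) ≜ (w ≡ v)`. -/
def Automaton.reinit (α : Automaton) (v : Loc) : Automaton :=
  { α with init := fun w _ => w = v }

/-- CIF compositions: automata, parallel composition, synchronizing-action operator. -/
inductive Comp where
  | atom : Automaton → Comp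
  | par : Comp → Comp → Comp
  | sync : Set Act → Comp → Comp

open Comp

/-- Explicit environment transitions `(p,σ) ⇝^A (p',σ')`. -/
inductive EnvStep : Comp → Valu → Set Act → Comp → Valu → Prop where
  | atom {α : Automaton} {v σ σ'} :
      v ∈ α.V → α.init v σ → α.inv v σ → α.inv v σ' →
      EnvStep (atom α) σ α.S (atom (α.reinit v)) σ'
  | par {p q p' q' σ σ' Ap Aq} :
      EnvStep p σ Ap p' σ' → EnvStep q σ Aq q' σ' →
      EnvStep (par p q) σ (Ap ∪ Aq) (par p' q') σ'
  | sync {p p' σ σ' A A'} :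
      EnvStep p σ A' p' σ' →
      EnvStep (sync A p) σ (A ∪ A') (sync A p') σ'

/-- Explicit action transitions `(p,σ) →^{a,b} (p',σ')`. -/
inductive ActStep : Comp → Valu → ActTau → Prop → Comp → Valu → Prop where
  | atom {α : Automaton} {v v' a r σ σ'} :
      (v, a, r, v') ∈ α.E → α.init v σ → α.inv v σ → α.inv v' σ' →
      r σ σ' → (∀ x, plusFree r x → σ x = σ' x) →
      ActStep (atom α) σ a (memTau a α.S) (atom (α.reinit v')) σ'
  | syncPar {p q p' q' a σ σ'} :
      ActStep p σ a True p' σ' → ActStep q σ a True q' σ' →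
      ActStep (par p q) σ a True (par p' q') σ'
  | interL {p q p' q' a b A σ σ'} :
      ActStep p σ a b p' σ' → EnvStep q σ A q' σ' → ¬ memTau a A →
      ActStep (par p q) σ a b (par p' q') σ'
  | interR {p q p' q' a b A σ σ'} :
      ActStep q σ a b q' σ' → EnvStep p σ A p' σ' → ¬ memTau a A →
      ActStep (par p q) σ a b (par p' q') σ'
  | sync {p p' a b A σ σ'} :
      ActStep p σ a b p' σ' →
      ActStep (sync A p) σ a (b ∨ memTau a A) (sync A p') σ'

/-- Symbolic environment transitions `p ⇝^{u,n,A} p'`. -/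
inductive SymEnv : Comp → SPred → SPred → Set Act → Comp → Prop where
  | atom {α : Automaton} {v} :
      v ∈ α.V →
      SymEnv (atom α) (α.init v) (α.inv v) α.S (atom (α.reinit v))
  | par {p q p' q' up uq np nq Ap Aq} :
      SymEnv p up np Ap p' → SymEnv q uq nq Aq q' →
      SymEnv (par p q) (up.and uq) (np.and nq) (Ap ∪ Aq) (par p' q')
  | sync {p p' u n A A'} :
      SymEnv p u n A' p' →
      SymEnv (sync A p) u n (A ∪ A') (sync A p')

/-- Symbolic action transitions `p →^{a,b,u,n,n',r} p'`. -/
inductive SymAct : Comp → ActTau → Prop → SPred → SPred → SPred → RPred → Comp → Prop where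
  | atom {α : Automaton} {v a r v'} :
      (v, a, r, v') ∈ α.E →
      SymAct (atom α) a (memTau a α.S) (α.init v) (α.inv v) (α.inv v') r
        (atom (α.reinit v'))
  | syncPar {p q p' q' a up uq np nq np' nq' rp rq} :
      SymAct p a True up np np' rp p' → SymAct q a True uq nq nq' rq q' →
      SymAct (par p q) a True (up.and uq) (np.and nq) (np'.and nq') (rp.and rq)
        (par p' q')
  | interL {p q p' q' a b up uq np nq np' r A} :
      SymAct p a b up np np' r p' → SymEnv q uq nq A q' → ¬ memTau a A →
      SymAct (par p q) a b (up.and uq) (np.and nq) (np'.and nq) r (par p' q')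
  | interR {p q p' q' a b up uq np nq nq' r A} :
      SymAct q a b uq nq nq' r q' → SymEnv p up np A p' → ¬ memTau a A →
      SymAct (par p q) a b (up.and uq) (np.and nq) (np.and nq') r (par p' q')
  | sync {p p' a b u n n' r A} :
      SymAct p a b u n n' r p' →
      SymAct (sync A p) a (b ∨ memTau a A) u n n' r (sync A p')

/-- Number of automata composed in parallel in a composition. -/
def nAut : Comp → ℕ
  | atom _ => 1
  | par p q => nAut p + nAut q
  | sync _ p => nAut p

/-- Initialization transitions `p ⇝ipred fs`. -/
inductive IpredOf : Comp → List (Loc → SPred) → Prop where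
  | atom (α : Automaton) : IpredOf (atom α) [α.init]
  | par {p q fp fq} : IpredOf p fp → IpredOf q fq → IpredOf (par p q) (fp ++ fq)
  | sync {p fs A} : IpredOf p fs → IpredOf (sync A p) fs

/-- Invariant transitions `p ⇝inv gs`. -/
inductive InvOf : Comp → List (Loc → SPred) → Prop where
  | atom (α : Automaton) : InvOf (atom α) [α.inv]
  | par {p q gp gq} : InvOf p gp → InvOf q gq → InvOf (par p q) (gp ++ gq)
  | sync {p gs A} : InvOf p gs → InvOf (sync A p) gs

/-- Synchronizing-action transitions `p ⇝sa A`. -/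
inductive SaOf : Comp → Set Act → Prop where
  | atom (α : Automaton) : SaOf (atom α) α.S
  | par {p q Ap Aq} : SaOf p Ap → SaOf q Aq → SaOf (par p q) (Ap ∪ Aq)
  | sync {p A A'} : SaOf p A' → SaOf (sync A p) (A ∪ A')

/-- Linear action transitions `p ⊨ vs →^{a,r} vs'`; `none` is the wild-card. -/
inductive LinAct : Comp → List (Option Loc) → ActTau → RPred → List (Option Loc) → Prop where
  | atom {α : Automaton} {v a r v'} :
      (v, a, r, v') ∈ α.E → LinAct (atom α) [some v] a r [some v']
  | interL {p q vs vs' a r A} :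
      LinAct p vs a r vs' → SaOf q A → ¬ memTau a A →
      LinAct (par p q) (vs ++ List.replicate (nAut q) none) a r
        (vs' ++ List.replicate (nAut q) none)
  | interR {p q vs vs' a r A} :
      LinAct q vs a r vs' → SaOf p A → ¬ memTau a A →
      LinAct (par p q) (List.replicate (nAut p) none ++ vs) a r
        (List.replicate (nAut p) none ++ vs')
  | syncPar {p q vsp vsq vsp' vsq' a rp rq Ap Aq} :
      LinAct p vsp a rp vsp' → LinAct q vsq a rq vsq' →
      SaOf p Ap → SaOf q Aq → memTau a Ap → memTau a Aq →
      LinAct (par p q) (vsp ++ vsq) a (rp.and rq) (vsp' ++ vsq')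
  | sync {p vs vs' a r A} :
      LinAct p vs a r vs' → LinAct (sync A p) vs a r vs'

/-- `locsof p`: sequences of locations, one per automaton of `p`. -/
def locsof : Comp → Set (List Loc)
  | atom α => {l | ∃ v ∈ α.V, l = [v]}
  | par p q => {l | ∃ lp ∈ locsof p, ∃ lq ∈ locsof q, l = lp ++ lq}
  | sync _ p => locsof p

/-- `p[is]`: re-initialize each automaton of `p` at the corresponding location. -/
def reinitC : Comp → List Loc → Comp
  | atom α, l => atom (α.reinit l.headI)
  | par p q, l => par (reinitC p (l.take (nAut p))) (reinitC q (l.drop (nAut p)))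
  | sync A p, l => sync A (reinitC p l)

/-- `⋀_{0 ≤ i < #fs} fs.i (is.i)` as a state predicate. -/
def bigAnd (fs : List (Loc → SPred)) (is : List Loc) : SPred :=
  fun σ => ∀ P ∈ List.zipWith (fun f v => f v) fs is, P σ

/-- Wild-card sub-sequence relation `vs ⊑ is`. -/
def subW : List (Option Loc) → List Loc → Prop
  | [], _ => True
  | x :: xs, y :: ys => (x = none ∨ x = some y) ∧ subW xs ys
  | _ :: _, [] => False

/-- Sequence overwriting `vs ▷ is`. -/
def owW : List (Option Loc) → List Loc → List Loc
  | [], ys => ys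
  | x :: xs, y :: ys => x.getD y :: owW xs ys
  | _ :: _, [] => []

lemma IpredOf.length {p fs} (h : IpredOf p fs) : fs.length = nAut p := by
  induction h <;> simp [nAut, *]

lemma InvOf.length {p gs} (h : InvOf p gs) : gs.length = nAut p := by
  induction h <;> simp [nAut, *]

lemma locsof_length {p is} (h : is ∈ locsof p) : is.length = nAut p := by
  induction p generalizing is with
  | atom α => obtain ⟨v, _, rfl⟩ := h; simp [nAut]
  | par p q ihp ihq =>
      obtain ⟨lp, hp, lq, hq, rfl⟩ := h
      simp [nAut, ihp hp, ihq hq]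
  | sync A p ih => exact ih h

lemma bigAnd_singleton (f : Loc → SPred) (v : Loc) : bigAnd [f] [v] = f v := by
  funext σ; apply propext; simp [bigAnd]

lemma bigAnd_append (fp fq : List (Loc → SPred)) (lp lq : List Loc)
    (h : fp.length = lp.length) :
    bigAnd (fp ++ fq) (lp ++ lq) = (bigAnd fp lp).and (bigAnd fq lq) := by
  funext σ; apply propext
  simp [bigAnd, SPred.and, List.zipWith_append h]
  aesop

theorem soundness_of_leads_to_transitions
    (p : Comp) (is : List Loc) (fs gs : List (Loc → SPred)) (A : Set Act)
    (u n : SPred)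
    (h1 : is ∈ locsof p)
    (h2f : IpredOf p fs) (h2g : InvOf p gs) (h2A : SaOf p A)
    (h3u : u = bigAnd fs is) (h3n : n = bigAnd gs is) :
    SymEnv p u n A (reinitC p is) := by
  subst h3u h3n
  induction p generalizing is fs gs A with
  | atom α =>
      obtain ⟨v, hv, rfl⟩ := h1
      cases h2f; cases h2g; cases h2A
      rw [bigAnd_singleton, bigAnd_singleton]
      exact SymEnv.atom hv
  | par p q ihp ihq =>
      obtain ⟨lp, hp, lq, hq, rfl⟩ := h1
      cases h2f with | par hfp hfq =>
      cases h2g with | par hgp hgq =>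
      cases h2A with | par hAp hAq =>
      have hlenf : _ = lp.length := hfp.length.trans (locsof_length hp).symm
      have hleng : _ = lp.length := hgp.length.trans (locsof_length hp).symm
      rw [bigAnd_append _ _ _ _ hlenf, bigAnd_append _ _ _ _ hleng]
      have hre : reinitC (par p q) (lp ++ lq) =
          par (reinitC p lp) (reinitC q lq) := by
        simp [reinitC, locsof_length hp]
      rw [hre]
      exact SymEnv.par (ihp _ _ _ _ hp hfp hgp hAp) (ihq _ _ _ _ hq hfq hgq hAq)
  | sync A' p ih =>
      cases h2f with | sync hf =>
      cases h2g with | sync hg =>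
      cases h2A with | sync hA =>
      exact SymEnv.sync (ih _ _ _ _ h1 hf hg hA)
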